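/- For n ≥ 2, the number of labeled trees on {1,...,n} in which every vertex has odd degree equals (1/2^n) ∑_{k=0}^{n} C(n,k) (2k - n)^{n-2}. -/

import Mathlib

set_option linter.unusedSectionVars false
open Finset SimpleGraph
attribute [local instance] Classical.propDecidable
attribute [-instance] SimpleGraph.Sup.adjDecidable SimpleGraph.instDecidableRelAdjEdge

variable {V : Type*} [Fintype V] [DecidableEq V]

/-- A graph is a tree on the finset `s`: edges stay within `s`, vertices of `s` are mutually
reachable, and the graph is acyclic. -/
def IsTreeOn (s : Finset V) (T : SimpleGraph V) : Prop :=
  (∀ ⦃a b⦄, T.Adj a b → a ∈ s ∧ b ∈ s) ∧ (∀ a ∈ s, ∀ b ∈ s, T.Reachable a b) ∧ T.IsAcyclic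

lemma two_le_degree_of_adj {T : SimpleGraph V} {v a b : V} (ha : T.Adj v a) (hb : T.Adj v b)
    (hab : a ≠ b) : 2 ≤ T.degree v := by
  rw [← card_neighborFinset_eq_degree]
  exact Finset.one_lt_card.mpr ⟨a, by simpa using ha, b, by simpa using hb, hab⟩

lemma adj_eq_of_degree_one {T : SimpleGraph V} {v a b : V} (h1 : T.degree v = 1)
    (ha : T.Adj v a) (hb : T.Adj v b) : a = b := by
  by_contra hab
  have := two_le_degree_of_adj ha hb hab
  omega

lemma eq_endpoints_of_degree_one {T : SimpleGraph V} {v a b : V} {p : T.Walk a b}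
    (hp : p.IsPath) (h1 : T.degree v = 1) (hv : v ∈ p.support) : v = a ∨ v = b := by
  induction p with
  | nil => simpa using hv
  | @cons a c b h q ih =>
    rw [SimpleGraph.Walk.cons_isPath_iff] at hp
    rcases List.mem_cons.mp (by simpa using hv) with h' | h'
    · exact Or.inl h'
    rcases ih hp.1 h' with rfl | rfl
    · -- v = c; show v = b or contradiction
      cases q with
      | nil => exact Or.inr rfl
      | @cons _ x _ h2 q2 =>
        exfalso
        have hx : x ∈ (SimpleGraph.Walk.cons h2 q2).support := by
          simp [SimpleGraph.Walk.support_cons]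
        have hxa : a ≠ x := fun hax => hp.2 (hax ▸ hx)
        have := two_le_degree_of_adj h.symm h2 hxa
        omega
    · exact Or.inr rfl

lemma two_le_degree_of_isCycle {T : SimpleGraph V} {v : V} {c : T.Walk v v}
    (hc : c.IsCycle) : 2 ≤ T.degree v := by
  cases c with
  | nil => exact absurd rfl hc.ne_nil
  | @cons _ x _ h p =>
    have hxv : x ≠ v := fun hxv => T.loopless.irrefl v (hxv ▸ h)
    obtain ⟨y, hy, q, hq⟩ := SimpleGraph.Walk.exists_eq_cons_of_ne (Ne.symm hxv) p.reverse
    -- hy : T.Adj v y, and s(v,y) ∈ p.edges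
    have hmem : s(v, y) ∈ p.edges := by
      have : s(v, y) ∈ p.reverse.edges := by rw [hq]; simp
      simpa [SimpleGraph.Walk.edges_reverse] using this
    by_cases hxy : x = y
    · exfalso
      subst hxy
      have := hc.isTrail.edges_nodup
      rw [SimpleGraph.Walk.edges_cons] at this
      exact (List.nodup_cons.mp this).1 (by simpa [Sym2.eq_swap] using hmem)
    · exact two_le_degree_of_adj h hy hxy

/-- Remove all edges at vertex `v`. -/
def eraseVert (T : SimpleGraph V) (v : V) : SimpleGraph V where
  Adj a b := T.Adj a b ∧ a ≠ v ∧ b ≠ v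
  symm := ⟨fun a b ⟨h, ha, hb⟩ => ⟨h.symm, hb, ha⟩⟩
  loopless := ⟨fun a ⟨h, _, _⟩ => T.loopless.irrefl a h⟩

@[simp] lemma eraseVert_adj {T : SimpleGraph V} {v a b : V} :
    (eraseVert T v).Adj a b ↔ T.Adj a b ∧ a ≠ v ∧ b ≠ v := Iff.rfl

lemma neighborFinset_eraseVert {T : SimpleGraph V} {v i : V} (hiv : i ≠ v) :
    (eraseVert T v).neighborFinset i = (T.neighborFinset i).erase v := by
  ext j
  simp only [mem_neighborFinset, eraseVert_adj, Finset.mem_erase]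
  constructor
  · rintro ⟨h, _, hj⟩; exact ⟨hj, h⟩
  · rintro ⟨hj, h⟩; exact ⟨h, hiv, hj⟩

lemma degree_eraseVert_of_adj {T : SimpleGraph V} {v i : V} (hiv : i ≠ v) (h : T.Adj i v) :
    (eraseVert T v).degree i = T.degree i - 1 := by
  rw [← card_neighborFinset_eq_degree, ← card_neighborFinset_eq_degree,
    neighborFinset_eraseVert hiv, Finset.card_erase_of_mem (by simpa using h)]

lemma degree_eraseVert_of_not_adj {T : SimpleGraph V} {v i : V} (hiv : i ≠ v)
    (h : ¬ T.Adj i v) : (eraseVert T v).degree i = T.degree i := by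
  rw [← card_neighborFinset_eq_degree, ← card_neighborFinset_eq_degree,
    neighborFinset_eraseVert hiv, Finset.erase_eq_of_notMem (by simpa using h)]

section AddLeaf
variable {T : SimpleGraph V} {u v : V} (huv : u ≠ v) (hv : ∀ a, ¬ T.Adj v a)

include huv hv in
lemma neighborFinset_sup_edge_self : (T ⊔ edge u v).neighborFinset v = {u} := by
  ext j
  simp only [mem_neighborFinset, sup_adj, edge_adj, Finset.mem_singleton]
  aesop

include huv hv in
lemma degree_sup_edge_self : (T ⊔ edge u v).degree v = 1 := by
  rw [← card_neighborFinset_eq_degree, neighborFinset_sup_edge_self huv hv]; simp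

include huv hv in
lemma degree_sup_edge_left : (T ⊔ edge u v).degree u = T.degree u + 1 := by
  have h2 : (T ⊔ edge u v).neighborFinset u = insert v (T.neighborFinset u) := by
    ext j
    simp only [mem_neighborFinset, sup_adj, edge_adj, Finset.mem_insert]
    constructor
    · rintro (h | ⟨⟨-, rfl⟩ | ⟨rfl, rfl⟩, hne⟩)
      · exact Or.inr h
      · exact Or.inl rfl
      · exact absurd rfl hne
    · rintro (rfl | h)
      · exact Or.inr ⟨Or.inl ⟨trivial, rfl⟩, huv⟩
      · exact Or.inl h
  rw [← card_neighborFinset_eq_degree, h2,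
    Finset.card_insert_of_notMem (by simpa using fun h => hv u h.symm),
    card_neighborFinset_eq_degree]

include huv in
lemma degree_sup_edge_other {i : V} (hiu : i ≠ u) (hiv : i ≠ v) :
    (T ⊔ edge u v).degree i = T.degree i := by
  rw [← card_neighborFinset_eq_degree, ← card_neighborFinset_eq_degree]
  congr 1
  ext j
  simp only [mem_neighborFinset, sup_adj, edge_adj]
  aesop

end AddLeaf

lemma IsTreeOn.eraseVert_leaf {s : Finset V} {T : SimpleGraph V} {v : V}
    (hT : IsTreeOn s T) (hdeg : T.degree v = 1) :
    IsTreeOn (s.erase v) (eraseVert T v) := by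
  obtain ⟨hsub, hreach, hacyc⟩ := hT
  refine ⟨?_, ?_, ?_⟩
  · rintro a b ⟨h, ha, hb⟩
    exact ⟨Finset.mem_erase.mpr ⟨ha, (hsub h).1⟩, Finset.mem_erase.mpr ⟨hb, (hsub h).2⟩⟩
  · intro a ha b hb
    rw [Finset.mem_erase] at ha hb
    obtain ⟨p0⟩ := hreach a ha.2 b hb.2
    obtain ⟨p, hp⟩ := p0.toPath
    have hv : v ∉ p.support := by
      intro hmem
      rcases eq_endpoints_of_degree_one hp hdeg hmem with rfl | rfl
      · exact ha.1 rfl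
      · exact hb.1 rfl
    have hedges : ∀ e ∈ p.edges, e ∈ (eraseVert T v).edgeSet := by
      intro e he
      induction e with
      | h x y =>
        rw [mem_edgeSet, eraseVert_adj]
        refine ⟨p.adj_of_mem_edges he, ?_, ?_⟩
        · exact fun hxv => hv (hxv ▸ SimpleGraph.Walk.fst_mem_support_of_mem_edges p he)
        · exact fun hyv => hv (hyv ▸ SimpleGraph.Walk.snd_mem_support_of_mem_edges p he)
    exact ⟨p.transfer _ hedges⟩
  · intro w c hc
    have hle : eraseVert T v ≤ T := by intro a b h; exact h.1
    exact hacyc (c.transfer T fun e he =>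
      SimpleGraph.edgeSet_mono hle (SimpleGraph.Walk.edges_subset_edgeSet c he))
      (hc.transfer _)

lemma isTreeOn_sup_edge {s : Finset V} {T' : SimpleGraph V} {u v : V}
    (hT : IsTreeOn (s.erase v) T') (hv : v ∈ s) (hu : u ∈ s.erase v) :
    IsTreeOn s (T' ⊔ edge u v) := by
  have huv : u ≠ v := (Finset.mem_erase.mp hu).1
  have hisol : ∀ a, ¬ T'.Adj v a := fun a h => (Finset.mem_erase.mp (hT.1 h).1).1 rfl
  refine ⟨?_, ?_, ?_⟩
  · rintro a b (h | h)
    · exact ⟨Finset.erase_subset _ _ (hT.1 h).1, Finset.erase_subset _ _ (hT.1 h).2⟩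
    · rw [edge_adj] at h
      rcases h.1 with ⟨rfl, rfl⟩ | ⟨rfl, rfl⟩
      · exact ⟨Finset.erase_subset _ _ hu, hv⟩
      · exact ⟨hv, Finset.erase_subset _ _ hu⟩
  · have key : ∀ a ∈ s, (T' ⊔ edge u v).Reachable a u := by
      intro a ha
      by_cases hav : a = v
      · subst hav
        exact SimpleGraph.Adj.reachable (Or.inr (by rw [edge_adj]; exact ⟨Or.inr ⟨rfl, rfl⟩, Ne.symm huv⟩))
      · exact (hT.2.1 a (Finset.mem_erase.mpr ⟨hav, ha⟩) u hu).mono le_sup_left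
    exact fun a ha b hb => (key a ha).trans (key b hb).symm
  · intro w c hc
    by_cases hvc : v ∈ c.support
    · have hc' := hc.rotate hvc
      have h2 := two_le_degree_of_isCycle hc'
      rw [degree_sup_edge_self huv hisol] at h2
      omega
    · have hedges : ∀ e ∈ c.edges, e ∈ T'.edgeSet := by
        intro e he
        induction e with
        | h x y =>
          have hx : x ≠ v := fun h => hvc (h ▸ SimpleGraph.Walk.fst_mem_support_of_mem_edges c he)
          have hy : y ≠ v := fun h => hvc (h ▸ SimpleGraph.Walk.snd_mem_support_of_mem_edges c he)
          have hadj := SimpleGraph.Walk.edges_subset_edgeSet c he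
          rw [mem_edgeSet, sup_adj, edge_adj] at hadj
          rw [mem_edgeSet]
          rcases hadj with h | ⟨⟨rfl, rfl⟩ | ⟨rfl, rfl⟩, _⟩
          · exact h
          · exact absurd rfl hy
          · exact absurd rfl hx
      exact hT.2.2 (c.transfer T' hedges) (hc.transfer _)

lemma eraseVert_sup_edge {T' : SimpleGraph V} {u v : V} (huv : u ≠ v)
    (hisol : ∀ a, ¬ T'.Adj v a) : eraseVert (T' ⊔ edge u v) v = T' := by
  ext a b
  rw [eraseVert_adj, sup_adj, edge_adj]
  constructor
  · rintro ⟨h | ⟨⟨rfl, rfl⟩ | ⟨rfl, rfl⟩, _⟩, ha, hb⟩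
    · exact h
    · exact absurd rfl hb
    · exact absurd rfl ha
  · intro h
    exact ⟨Or.inl h, fun hav => hisol b (hav ▸ h), fun hbv => hisol a (hbv ▸ h.symm)⟩

lemma sup_edge_eraseVert {T : SimpleGraph V} {u v : V} (hdeg : T.degree v = 1)
    (hadj : T.Adj v u) : (eraseVert T v) ⊔ edge u v = T := by
  ext a b
  rw [sup_adj, eraseVert_adj, edge_adj]
  constructor
  · rintro (⟨h, _, _⟩ | ⟨⟨rfl, rfl⟩ | ⟨rfl, rfl⟩, _⟩)
    · exact h
    · exact hadj.symm
    · exact hadj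
  · intro h
    by_cases hav : a = v
    · subst hav
      exact Or.inr ⟨Or.inr ⟨rfl, adj_eq_of_degree_one hdeg h hadj⟩, h.ne⟩
    · by_cases hbv : b = v
      · subst hbv
        exact Or.inr ⟨Or.inl ⟨adj_eq_of_degree_one hdeg h.symm hadj, rfl⟩, h.ne⟩
      · exact Or.inl ⟨h, hav, hbv⟩

lemma degree_edge_le_one {a b w : V} : (edge a b).degree w ≤ 1 := by
  rw [← card_neighborFinset_eq_degree]
  refine Finset.card_le_one.mpr ?_
  intro x hx y hy
  rw [mem_neighborFinset, edge_adj] at hx hy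
  rcases hx.1 with ⟨rfl, rfl⟩ | ⟨rfl, rfl⟩ <;> rcases hy.1 with ⟨h1, rfl⟩ | ⟨h1, rfl⟩ <;> tauto

lemma degree_edge_self {a b : V} (hab : a ≠ b) : (edge a b).degree a = 1 := by
  have : (edge a b).neighborFinset a = {b} := by
    ext j
    rw [mem_neighborFinset, edge_adj, Finset.mem_singleton]
    constructor
    · rintro ⟨⟨h1, rfl⟩ | ⟨rfl, rfl⟩, hne⟩
      · rfl
      · exact absurd rfl hne
    · rintro rfl; exact ⟨Or.inl ⟨rfl, rfl⟩, hab⟩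
  rw [← card_neighborFinset_eq_degree, this, Finset.card_singleton]

lemma isTreeOn_edge {a b : V} (hab : a ≠ b) : IsTreeOn {a, b} (edge a b) := by
  refine ⟨?_, ?_, ?_⟩
  · intro x y h
    rw [edge_adj] at h
    rcases h.1 with ⟨rfl, rfl⟩ | ⟨rfl, rfl⟩ <;> simp
  · intro x hx y hy
    simp only [Finset.mem_insert, Finset.mem_singleton] at hx hy
    have hadj : (edge a b).Adj a b := by rw [edge_adj]; exact ⟨Or.inl ⟨rfl, rfl⟩, hab⟩
    rcases hx with rfl | rfl <;> rcases hy with rfl | rfl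
    · rfl
    · exact hadj.reachable
    · exact hadj.symm.reachable
    · rfl
  · intro w c hc
    have := two_le_degree_of_isCycle hc
    have := degree_edge_le_one (a := a) (b := b) (w := w)
    omega

lemma isTreeOn_pair_eq {a b : V} (hab : a ≠ b) {T : SimpleGraph V}
    (hT : IsTreeOn {a, b} T) : T = edge a b := by
  have hadj : T.Adj a b := by
    obtain ⟨p0⟩ := hT.2.1 a (by simp) b (by simp)
    obtain ⟨p, hp⟩ := p0.toPath
    obtain ⟨x, h, q, rfl⟩ := SimpleGraph.Walk.exists_eq_cons_of_ne hab p
    have hx := (hT.1 h).2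
    simp only [Finset.mem_insert, Finset.mem_singleton] at hx
    rcases hx with rfl | rfl
    · exact absurd rfl h.ne
    · exact h
  ext x y
  rw [edge_adj]
  constructor
  · intro h
    have hx := (hT.1 h).1
    have hy := (hT.1 h).2
    simp only [Finset.mem_insert, Finset.mem_singleton] at hx hy
    rcases hx with rfl | rfl <;> rcases hy with rfl | rfl
    · exact absurd rfl h.ne
    · exact ⟨Or.inl ⟨rfl, rfl⟩, h.ne⟩
    · exact ⟨Or.inr ⟨rfl, rfl⟩, h.ne⟩
    · exact absurd rfl h.ne
  · rintro ⟨⟨rfl, rfl⟩ | ⟨rfl, rfl⟩, _⟩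
    · exact hadj
    · exact hadj.symm

lemma no_two_leaves {s : Finset V} {T : SimpleGraph V} (hT : IsTreeOn s T) (h3 : 3 ≤ s.card)
    {u v : V} (hadj : T.Adj v u) (hdv : T.degree v = 1) (hdu : T.degree u = 1) : False := by
  have husv : u ∈ s := (hT.1 hadj).2
  have hvs : v ∈ s := (hT.1 hadj).1
  have hne : (s \ {u, v}).Nonempty := by
    rw [← Finset.card_pos]
    have h1 := Finset.le_card_sdiff ({u, v} : Finset V) s
    have h2 : ({u, v} : Finset V).card ≤ 2 := Finset.card_insert_le _ _ |>.trans (by simp)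
    omega
  obtain ⟨w, hw⟩ := hne
  rw [Finset.mem_sdiff, Finset.mem_insert, Finset.mem_singleton] at hw
  push_neg at hw
  obtain ⟨hws, hwu, hwv⟩ := hw
  obtain ⟨p0⟩ := hT.2.1 u husv w hws
  obtain ⟨p, hp⟩ := p0.toPath
  obtain ⟨x, h, q, rfl⟩ := SimpleGraph.Walk.exists_eq_cons_of_ne (Ne.symm hwu) p
  have hx : x = v := adj_eq_of_degree_one hdu h hadj.symm
  subst hx
  obtain ⟨y, h2, q2, rfl⟩ := SimpleGraph.Walk.exists_eq_cons_of_ne (Ne.symm hwv) q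
  have hy : y = u := adj_eq_of_degree_one hdv h2 hadj
  subst hy
  rw [SimpleGraph.Walk.cons_isPath_iff] at hp
  exact hp.2 (by simp [SimpleGraph.Walk.support_cons])

lemma core_count (N : ℕ) : ∀ (s : Finset V) (d : V → ℕ), s.card = N → 2 ≤ N →
    (∀ i ∈ s, 1 ≤ d i) → (∑ i ∈ s, d i = 2 * (N - 1)) →
    Nat.card {T : SimpleGraph V // IsTreeOn s T ∧ ∀ i ∈ s, T.degree i = d i} *
      ∏ i ∈ s, Nat.factorial (d i - 1) = Nat.factorial (N - 2) := by
  induction N using Nat.strong_induction_on with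
  | _ N IH =>
  intro s d hcard h2 hd1 hsum
  haveI : Fintype (SimpleGraph V) := Fintype.ofFinite _
  rcases eq_or_lt_of_le h2 with h2' | h3
  · -- base case N = 2
    obtain ⟨a, b, hab, rfl⟩ := Finset.card_eq_two.mp (hcard.trans h2'.symm)
    have hsumab : d a + d b = 2 := by
      rw [Finset.sum_pair hab] at hsum
      omega
    have hda : d a = 1 := by
      have := hd1 a (by simp); have := hd1 b (by simp); omega
    have hdb : d b = 1 := by omega
    have hcard1 : Nat.card {T : SimpleGraph V //
        IsTreeOn {a, b} T ∧ ∀ i ∈ ({a, b} : Finset V), T.degree i = d i} = 1 := by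
      rw [Nat.card_eq_one_iff_unique]
      constructor
      · constructor
        intro ⟨T1, hT1, _⟩ ⟨T2, hT2, _⟩
        simp only [Subtype.mk.injEq]
        rw [isTreeOn_pair_eq hab hT1, isTreeOn_pair_eq hab hT2]
      · refine ⟨⟨edge a b, isTreeOn_edge hab, ?_⟩⟩
        intro i hi
        simp only [Finset.mem_insert, Finset.mem_singleton] at hi
        have hcomm : edge a b = edge b a := by ext x y; rw [edge_adj, edge_adj]; tauto
        rcases hi with ha | hb
        · rw [ha, degree_edge_self hab, hda]
        · rw [hb, hcomm, degree_edge_self (Ne.symm hab), hdb]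
    rw [hcard1, Finset.prod_pair hab, hda, hdb, ← h2']
    simp [Nat.factorial]
  · -- inductive step N ≥ 3
    -- find a leaf
    have hleaf : ∃ v ∈ s, d v = 1 := by
      by_contra hno
      push_neg at hno
      have : ∀ i ∈ s, 2 ≤ d i := by
        intro i hi
        have := hd1 i hi
        have := hno i hi
        omega
      have hge : 2 * N ≤ ∑ i ∈ s, d i := by
        calc 2 * N = ∑ _i ∈ s, 2 := by rw [Finset.sum_const, hcard]; ring
        _ ≤ ∑ i ∈ s, d i := Finset.sum_le_sum this
      omega
    obtain ⟨v, hvs, hdv⟩ := hleaf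
    set s' := s.erase v with hs'
    have hcard' : s'.card = N - 1 := by rw [hs', Finset.card_erase_of_mem hvs, hcard]
    -- the finset of trees
    set P : SimpleGraph V → Prop := fun T => IsTreeOn s T ∧ ∀ i ∈ s, T.degree i = d i with hP
    set Ts : Finset (SimpleGraph V) := Finset.univ.filter P with hTs
    have hNatTs : Nat.card {T : SimpleGraph V // P T} = Ts.card := by
      rw [Nat.card_eq_fintype_card, Fintype.card_subtype]
    -- every T in Ts has a unique neighbor of v
    have hTadj : ∀ T ∈ Ts, ∃ u, T.Adj v u := by
      intro T hT
      rw [hTs, Finset.mem_filter] at hT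
      have hdeg := hT.2.2 v hvs
      rw [hdv] at hdeg
      rw [← SimpleGraph.degree_pos_iff_exists_adj]
      omega
    classical
    set f : SimpleGraph V → V := fun T => if h : ∃ u, T.Adj v u then h.choose else v with hf
    have hfadj : ∀ T ∈ Ts, T.Adj v (f T) := by
      intro T hT
      obtain ⟨u, hu⟩ := hTadj T hT
      have he : ∃ w, T.Adj v w := ⟨u, hu⟩
      simp only [hf, dif_pos he]
      exact he.choose_spec
    have hfib : Ts.card = ∑ u ∈ s', (Ts.filter (fun T => f T = u)).card := by
      refine Finset.card_eq_sum_card_fiberwise ?_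
      intro T hT
      have hadj := hfadj T hT
      rw [hs', Finset.mem_coe, Finset.mem_erase]
      rw [Finset.mem_coe, hTs, Finset.mem_filter] at hT
      exact ⟨hadj.ne', (hT.2.1.1 hadj).2⟩
    have hfib_eq : ∀ u ∈ s', Ts.filter (fun T => f T = u) = Ts.filter (fun T => T.Adj v u) := by
      intro u hu
      ext T
      simp only [Finset.mem_filter, and_congr_right_iff]
      intro hT
      constructor
      · rintro rfl
        exact hfadj T hT
      · intro hadj
        have hPT := (Finset.mem_filter.mp hT).2
        have hdegv : T.degree v = 1 := by rw [hPT.2 v hvs, hdv]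
        exact adj_eq_of_degree_one hdegv (hfadj T hT) hadj
    have key : ∀ u ∈ s', (Ts.filter (fun T => T.Adj v u)).card *
        ∏ i ∈ s', Nat.factorial (d i - 1) = (d u - 1) * Nat.factorial (N - 3) := by
      intro u hu'
      have huv : u ≠ v := (Finset.mem_erase.mp hu').1
      have hus : u ∈ s := (Finset.mem_erase.mp hu').2
      by_cases hdu : d u = 1
      · have hempty : Ts.filter (fun T => T.Adj v u) = ∅ := by
          rw [Finset.filter_eq_empty_iff]
          intro T hT hadj
          have hPT := (Finset.mem_filter.mp hT).2
          exact no_two_leaves hPT.1 (by omega : 3 ≤ s.card)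
            hadj (by rw [hPT.2 v hvs, hdv]) (by rw [hPT.2 u hus]; exact hdu)
        rw [hempty, hdu]
        simp
      · have hdu2 : 2 ≤ d u := by have := hd1 u hus; omega
        set d' : V → ℕ := Function.update d u (d u - 1) with hd'
        set Ts' : Finset (SimpleGraph V) := Finset.univ.filter
          (fun T' => IsTreeOn s' T' ∧ ∀ i ∈ s', T'.degree i = d' i) with hTs'
        have hbij : (Ts.filter (fun T => T.Adj v u)).card = Ts'.card := by
          refine Finset.card_bij (fun T _ => eraseVert T v) ?_ ?_ ?_
          · intro T hT
            rw [Finset.mem_filter] at hT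
            obtain ⟨hT1, hadj⟩ := hT
            have hPT := (Finset.mem_filter.mp hT1).2
            have hdegv : T.degree v = 1 := by rw [hPT.2 v hvs, hdv]
            rw [hTs', Finset.mem_filter]
            refine ⟨Finset.mem_univ _, hPT.1.eraseVert_leaf hdegv, ?_⟩
            intro i hi'
            have hiv : i ≠ v := (Finset.mem_erase.mp hi').1
            have his : i ∈ s := (Finset.mem_erase.mp hi').2
            by_cases hiu : i = u
            · rw [hiu, degree_eraseVert_of_adj huv hadj.symm, hPT.2 u hus, hd',
                Function.update_self]
            · have hnadj : ¬ T.Adj i v := fun h =>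
                hiu (adj_eq_of_degree_one hdegv h.symm hadj)
              rw [degree_eraseVert_of_not_adj hiv hnadj, hPT.2 i his, hd',
                Function.update_of_ne hiu]
          · intro T1 h1 T2 h2 heq
            rw [Finset.mem_filter] at h1 h2
            have hP1 := (Finset.mem_filter.mp h1.1).2
            have hP2 := (Finset.mem_filter.mp h2.1).2
            have hdeg1 : T1.degree v = 1 := by rw [hP1.2 v hvs, hdv]
            have hdeg2 : T2.degree v = 1 := by rw [hP2.2 v hvs, hdv]
            rw [← sup_edge_eraseVert hdeg1 h1.2, ← sup_edge_eraseVert hdeg2 h2.2, heq]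
          · intro T' hT'
            rw [hTs', Finset.mem_filter] at hT'
            obtain ⟨-, hT'tree, hT'deg⟩ := hT'
            have hisol : ∀ a, ¬ T'.Adj v a := fun a h =>
              (Finset.mem_erase.mp (hT'tree.1 h).1).1 rfl
            have hadjvu : (T' ⊔ edge u v).Adj v u := by
              rw [sup_adj, edge_adj]
              exact Or.inr ⟨Or.inr ⟨rfl, rfl⟩, Ne.symm huv⟩
            refine ⟨T' ⊔ edge u v, ?_, eraseVert_sup_edge huv hisol⟩
            rw [Finset.mem_filter, hTs, Finset.mem_filter]
            refine ⟨⟨Finset.mem_univ _, isTreeOn_sup_edge hT'tree hvs hu', ?_⟩, hadjvu⟩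
            intro i his
            by_cases hiv : i = v
            · rw [hiv, degree_sup_edge_self huv hisol, hdv]
            · by_cases hiu : i = u
              · have hdegu := hT'deg u hu'
                rw [hd', Function.update_self] at hdegu
                rw [hiu, degree_sup_edge_left huv hisol, hdegu]
                omega
              · rw [degree_sup_edge_other huv hiu hiv,
                  hT'deg i (Finset.mem_erase.mpr ⟨hiv, his⟩), hd', Function.update_of_ne hiu]
        have hd'1 : ∀ i ∈ s', 1 ≤ d' i := by
          intro i hi'
          by_cases hiu : i = u
          · rw [hiu, hd', Function.update_self]; omega
          · rw [hd', Function.update_of_ne hiu]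
            exact hd1 i (Finset.mem_erase.mp hi').2
        have hd'sum : ∑ i ∈ s', d' i = 2 * (N - 1 - 1) := by
          have e1 : ∑ i ∈ s', d i + d v = ∑ i ∈ s, d i := Finset.sum_erase_add s d hvs
          have e2 : ∑ i ∈ s', d' i + d u = ∑ i ∈ s', d i + (d u - 1) := by
            have e3 : ∑ i ∈ s', d' i = ∑ i ∈ s'.erase u, d i + (d u - 1) := by
              rw [← Finset.sum_erase_add s' d' hu', hd', Function.update_self]
              congr 1
              refine Finset.sum_congr rfl ?_
              intro i hi'
              exact Function.update_of_ne (Finset.mem_erase.mp hi').1 _ _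
            have e4 : ∑ i ∈ s'.erase u, d i + d u = ∑ i ∈ s', d i :=
              Finset.sum_erase_add s' d hu'
            omega
          omega
        have hIH := IH (N - 1) (by omega) s' d' hcard' (by omega) hd'1 hd'sum
        have hIH' : Ts'.card * ∏ i ∈ s', Nat.factorial (d' i - 1) =
            Nat.factorial (N - 3) := by
          rw [hTs']
          rw [show N - 3 = N - 1 - 2 by omega, ← hIH]
          congr 1
          rw [Nat.card_eq_fintype_card, Fintype.card_subtype]
        have hprodrel : ∏ i ∈ s', Nat.factorial (d i - 1) =
            (d u - 1) * ∏ i ∈ s', Nat.factorial (d' i - 1) := by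
          rw [← Finset.mul_prod_erase s' _ hu', ← Finset.mul_prod_erase s'
            (fun i => Nat.factorial (d' i - 1)) hu']
          have hrest : ∏ i ∈ s'.erase u, Nat.factorial (d i - 1) =
              ∏ i ∈ s'.erase u, Nat.factorial (d' i - 1) := by
            refine Finset.prod_congr rfl ?_
            intro i hi'
            rw [hd', Function.update_of_ne (Finset.mem_erase.mp hi').1]
          rw [hrest, hd', Function.update_self]
          have : Nat.factorial (d u - 1) = (d u - 1) * Nat.factorial (d u - 1 - 1) := by
            rw [Nat.mul_factorial_pred (by omega)]
          rw [this]
          ring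
        rw [hbij, hprodrel, ← mul_assoc, mul_comm Ts'.card (d u - 1), mul_assoc, hIH']
    -- assemble
    have hprodv : ∏ i ∈ s, Nat.factorial (d i - 1) = ∏ i ∈ s', Nat.factorial (d i - 1) := by
      rw [← Finset.mul_prod_erase s _ hvs, hdv]
      simp [Nat.factorial, hs']
    rw [hNatTs, hfib, hprodv, Finset.sum_mul]
    have hsumeq : ∀ u ∈ s', (Ts.filter (fun T => f T = u)).card *
        ∏ i ∈ s', Nat.factorial (d i - 1) = (d u - 1) * Nat.factorial (N - 3) := by
      intro u hu'
      rw [hfib_eq u hu']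
      exact key u hu'
    rw [Finset.sum_congr rfl hsumeq, ← Finset.sum_mul]
    have hsum' : ∑ u ∈ s', (d u - 1) = N - 2 := by
      have e1 : ∑ i ∈ s', d i + d v = ∑ i ∈ s, d i := Finset.sum_erase_add s d hvs
      have e2 : ∑ u ∈ s', ((d u - 1) + 1) = ∑ u ∈ s', d u := by
        refine Finset.sum_congr rfl ?_
        intro i hi'
        have := hd1 i (Finset.mem_erase.mp hi').2
        omega
      rw [Finset.sum_add_distrib] at e2
      simp only [Finset.sum_const, smul_eq_mul, mul_one] at e2
      omega
    rw [hsum']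
    rw [show N - 3 = N - 2 - 1 by omega]
    exact Nat.mul_factorial_pred (by omega)

lemma isTreeOn_univ_iff {T : SimpleGraph V} (hne : Nonempty V) :
    IsTreeOn (Finset.univ : Finset V) T ↔ T.IsTree := by
  rw [SimpleGraph.isTree_iff]
  constructor
  · rintro ⟨-, hreach, hacyc⟩
    exact ⟨(SimpleGraph.connected_iff T).mpr
      ⟨fun a b => hreach a (Finset.mem_univ a) b (Finset.mem_univ b), hne⟩, hacyc⟩
  · rintro ⟨hconn, hacyc⟩
    exact ⟨fun a b _ => ⟨Finset.mem_univ _, Finset.mem_univ _⟩,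
      fun a _ b _ => hconn.preconnected a b, hacyc⟩

lemma natCard_adj (T : SimpleGraph V) (i : V) :
    Nat.card {j // T.Adj i j} = T.degree i := by
  have h : Nat.card {j // T.Adj i j} = Nat.card (T.neighborSet i) := rfl
  rw [h, Nat.card_eq_fintype_card, card_neighborSet_eq_degree]

theorem stmt_7 (n : ℕ) (hn : 2 ≤ n) :
    (Nat.card {T : SimpleGraph (Fin n) //
        T.IsTree ∧ ∀ i, Odd (Nat.card {j // T.Adj i j})} : ℚ) =
      (1 / 2 ^ n) *
        ∑ k ∈ Finset.range (n + 1), (n.choose k : ℚ) * (2 * (k : ℚ) - n) ^ (n - 2) := by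
  haveI : Fintype (SimpleGraph (Fin n)) := Fintype.ofFinite _
  have hne : Nonempty (Fin n) := ⟨⟨0, by omega⟩⟩
  set t : Finset (Fin n → ℕ) :=
    (Finset.piAntidiag Finset.univ (n - 2)).filter (fun c => ∀ i, Even (c i)) with ht
  -- LHS
  have hcarduniv : (Finset.univ : Finset (Fin n)).card = n := by simp
  have hL : (Nat.card {T : SimpleGraph (Fin n) //
      T.IsTree ∧ ∀ i, Odd (Nat.card {j // T.Adj i j})} : ℚ) =
      ∑ c ∈ t, (Nat.multinomial Finset.univ c : ℚ) := by
    have hNat : Nat.card {T : SimpleGraph (Fin n) //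
        T.IsTree ∧ ∀ i, Odd (Nat.card {j // T.Adj i j})} =
        (Finset.univ.filter (fun T : SimpleGraph (Fin n) =>
          T.IsTree ∧ ∀ i, Odd (Nat.card {j // T.Adj i j}))).card := by
      rw [Nat.card_eq_fintype_card, Fintype.card_subtype]
    have hmem : ∀ T ∈ Finset.univ.filter (fun T : SimpleGraph (Fin n) =>
        T.IsTree ∧ ∀ i, Odd (Nat.card {j // T.Adj i j})),
        (fun i => T.degree i - 1) ∈ t := by
      intro T hT
      rw [Finset.mem_filter] at hT
      obtain ⟨-, hTree, hodd⟩ := hT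
      simp only [natCard_adj] at hodd
      have hd1 : ∀ i, 1 ≤ T.degree i := by
        intro i
        have := hodd i
        rcases this with ⟨m, hm⟩
        omega
      have hhandshake : ∑ i, T.degree i = 2 * (n - 1) := by
        have h1 := SimpleGraph.sum_degrees_eq_twice_card_edges T
        have h2 := hTree.card_edgeFinset
        rw [Fintype.card_fin] at h2
        omega
      have hsub : ∑ i, (T.degree i - 1) = n - 2 := by
        have e2 : ∑ i, ((T.degree i - 1) + 1) = ∑ i, T.degree i :=
          Finset.sum_congr rfl (fun i _ => by have := hd1 i; omega)
        rw [Finset.sum_add_distrib] at e2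
        simp only [Finset.sum_const, smul_eq_mul, mul_one, Finset.card_univ,
          Fintype.card_fin] at e2
        omega
      rw [ht, Finset.mem_filter, Finset.mem_piAntidiag]
      refine ⟨⟨hsub, fun i _ => Finset.mem_univ i⟩, ?_⟩
      intro i
      obtain ⟨m, hm⟩ := hodd i
      have he : T.degree i - 1 = m + m := by omega
      exact ⟨m, he⟩
    rw [hNat, Finset.card_eq_sum_card_fiberwise hmem, Nat.cast_sum]
    refine Finset.sum_congr rfl ?_
    intro c hc
    rw [ht, Finset.mem_filter, Finset.mem_piAntidiag] at hc
    obtain ⟨⟨hcsum, -⟩, hceven⟩ := hc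
    have hfibeq : (Finset.univ.filter (fun T : SimpleGraph (Fin n) =>
        T.IsTree ∧ ∀ i, Odd (Nat.card {j // T.Adj i j}))).filter
        (fun T => (fun i => T.degree i - 1) = c) =
        Finset.univ.filter (fun T : SimpleGraph (Fin n) =>
          IsTreeOn Finset.univ T ∧ ∀ i ∈ (Finset.univ : Finset (Fin n)),
            T.degree i = c i + 1) := by
      ext T
      simp only [Finset.mem_filter, Finset.mem_univ, true_and]
      constructor
      · rintro ⟨⟨hTree, hodd⟩, hfun⟩
        refine ⟨(isTreeOn_univ_iff hne).mpr hTree, ?_⟩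
        intro i _
        have h1 : T.degree i - 1 = c i := by simpa using congrFun hfun i
        have h2 := hodd i
        rw [natCard_adj] at h2
        rcases h2 with ⟨m, hm⟩
        omega
      · rintro ⟨hTree, hdeg⟩
        refine ⟨⟨(isTreeOn_univ_iff hne).mp hTree, ?_⟩, ?_⟩
        · intro i
          rw [natCard_adj, hdeg i trivial]
          obtain ⟨m, hm⟩ := hceven i
          exact ⟨m, by omega⟩
        · funext i
          show T.degree i - 1 = c i
          rw [hdeg i trivial]
          omega
    rw [hfibeq]
    -- apply core count
    have hcore := core_count (V := Fin n) n Finset.univ (fun i => c i + 1)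
      hcarduniv hn (fun i _ => Nat.le_add_left 1 (c i))
      (by
        have e : ∑ i ∈ Finset.univ, (c i + 1) =
            (∑ i ∈ Finset.univ, c i) + (Finset.univ : Finset (Fin n)).card := by
          rw [Finset.sum_add_distrib, Finset.sum_const, smul_eq_mul, mul_one]
        rw [e, hcsum, hcarduniv]
        omega)
    simp only [Nat.add_sub_cancel] at hcore
    have hNat2 : Nat.card {T : SimpleGraph (Fin n) // IsTreeOn Finset.univ T ∧
        ∀ i ∈ (Finset.univ : Finset (Fin n)), T.degree i = c i + 1} =
        (Finset.univ.filter (fun T : SimpleGraph (Fin n) =>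
          IsTreeOn Finset.univ T ∧ ∀ i ∈ (Finset.univ : Finset (Fin n)),
            T.degree i = c i + 1)).card := by
      rw [Nat.card_eq_fintype_card, Fintype.card_subtype]
    rw [hNat2] at hcore
    have hspec := Nat.multinomial_spec Finset.univ c
    rw [hcsum] at hspec
    have hprodpos : 0 < ∏ i, Nat.factorial (c i) :=
      Finset.prod_pos (fun i _ => Nat.factorial_pos _)
    have : (Finset.univ.filter (fun T : SimpleGraph (Fin n) =>
        IsTreeOn Finset.univ T ∧ ∀ i ∈ (Finset.univ : Finset (Fin n)),
          T.degree i = c i + 1)).card = Nat.multinomial Finset.univ c := by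
      have heq := hcore.trans hspec.symm
      rw [mul_comm] at heq
      exact Nat.eq_of_mul_eq_mul_left hprodpos heq
    rw [this]
  -- RHS computation
  have hR : ∑ k ∈ Finset.range (n + 1), (n.choose k : ℚ) * (2 * (k : ℚ) - n) ^ (n - 2) =
      2 ^ n * ∑ c ∈ t, (Nat.multinomial Finset.univ c : ℚ) := by
    have h1 : ∑ k ∈ Finset.range (n + 1), (n.choose k : ℚ) * (2 * (k : ℚ) - n) ^ (n - 2)
        = ∑ A ∈ (Finset.univ : Finset (Fin n)).powerset,
            (2 * (A.card : ℚ) - n) ^ (n - 2) := by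
      rw [Finset.sum_powerset_apply_card (f := fun k => (2 * (k : ℚ) - n) ^ (n - 2))]
      rw [hcarduniv]
      refine Finset.sum_congr rfl ?_
      intro k _
      rw [nsmul_eq_mul]
    have h2 : ∀ A : Finset (Fin n), (2 * (A.card : ℚ) - n) =
        ∑ i, (if i ∈ A then (1 : ℚ) else -1) := by
      intro A
      have : ∀ i : Fin n, (if i ∈ A then (1 : ℚ) else -1) =
          2 * (if i ∈ A then (1 : ℚ) else 0) - 1 := by
        intro i
        by_cases h : i ∈ A <;> simp [h] <;> norm_num
      rw [Finset.sum_congr rfl (fun i _ => this i), Finset.sum_sub_distrib,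
        ← Finset.mul_sum, Finset.sum_boole, Finset.sum_const]
      have hfA : Finset.univ.filter (fun i => i ∈ A) = A := by
        ext i; simp
      rw [hfA, hcarduniv]
      push_cast
      ring
    have h3 : ∀ A : Finset (Fin n), (2 * (A.card : ℚ) - n) ^ (n - 2) =
        ∑ k ∈ Finset.piAntidiag Finset.univ (n - 2),
          (Nat.multinomial Finset.univ k : ℚ) *
            ∏ i, (if i ∈ A then (1 : ℚ) else -1) ^ k i := by
      intro A
      rw [h2 A, Finset.sum_pow_eq_sum_piAntidiag]
    rw [h1, Finset.sum_congr rfl (fun A _ => h3 A), Finset.sum_comm]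
    have h4 : ∀ k ∈ Finset.piAntidiag Finset.univ (n - 2),
        ∑ A ∈ (Finset.univ : Finset (Fin n)).powerset,
          (Nat.multinomial Finset.univ k : ℚ) *
            ∏ i, (if i ∈ A then (1 : ℚ) else -1) ^ k i =
        (Nat.multinomial Finset.univ k : ℚ) *
          (if ∀ i, Even (k i) then (2 : ℚ) ^ n else 0) := by
      intro k _
      rw [← Finset.mul_sum]
      congr 1
      have h5 : ∀ A ∈ (Finset.univ : Finset (Fin n)).powerset,
          ∏ i, (if i ∈ A then (1 : ℚ) else -1) ^ k i =
          (∏ i ∈ A, ((1 : ℚ) ^ k i)) * ∏ i ∈ Finset.univ \ A, ((-1 : ℚ) ^ k i) := by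
        intro A _
        rw [← Finset.prod_sdiff (Finset.subset_univ A)]
        rw [mul_comm]
        congr 1
        · refine Finset.prod_congr rfl ?_
          intro i hi
          rw [if_pos hi]
        · refine Finset.prod_congr rfl ?_
          intro i hi
          rw [Finset.mem_sdiff] at hi
          rw [if_neg hi.2]
      rw [Finset.sum_congr rfl h5, ← Finset.prod_add]
      by_cases h : ∀ i, Even (k i)
      · rw [if_pos h]
        have : ∀ i ∈ (Finset.univ : Finset (Fin n)),
            ((1 : ℚ) ^ k i + (-1) ^ k i) = 2 := by
          intro i _
          rw [one_pow, (h i).neg_one_pow]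
          norm_num
        rw [Finset.prod_congr rfl this, Finset.prod_const, hcarduniv]
      · rw [if_neg h]
        push_neg at h
        obtain ⟨i, hi⟩ := h
        refine Finset.prod_eq_zero (Finset.mem_univ i) ?_
        rw [one_pow, (Nat.odd_iff.mpr (by
          rcases Nat.even_or_odd (k i) with he | ho
          · exact absurd he hi
          · exact Nat.odd_iff.mp ho)).neg_one_pow]
        ring
    rw [Finset.sum_congr rfl h4]
    rw [Finset.mul_sum]
    rw [ht, Finset.sum_filter]
    refine Finset.sum_congr rfl ?_
    intro k _
    by_cases h : ∀ i, Even (k i)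
    · rw [if_pos h, if_pos h]
      ring
    · rw [if_neg h, if_neg h]
      ring
  rw [hL, hR]
  have h2n : (2 : ℚ) ^ n ≠ 0 := by positivity
  field_simp
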